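/- The vertex 0 is a cone point of the no broken circuit complex of a loopless matroid M on {0,...,n}: for every face F of the no broken circuit complex (a set containing no broken circuit and independent in M), the set F ∪ {0} is also a face, provided M has no parallel pair containing 0 and no loops. -/

import Mathlib

open Set

/-- A circuit of a matroid: a minimal dependent set. -/
def Matroid.IsCircuit' {α : Type*} (M : Matroid α) (C : Set α) : Prop :=
  M.Dep C ∧ ∀ D ⊂ C, M.Indep D

/-- A broken circuit: a circuit with its least element (in the natural order) removed. -/
def Matroid.IsBrokenCircuit {n : ℕ} (M : Matroid (Fin (n + 1))) (B : Set (Fin (n + 1))) : Prop :=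
  ∃ C m, M.IsCircuit' C ∧ m ∈ C ∧ (∀ k ∈ C, m ≤ k) ∧ B = C \ {m}

/-- `0` is a cone point of the no broken circuit complex: for every face `F`
(a set containing no broken circuit and independent in `M`), `F ∪ {0}` is again a face,
provided `M` has no loops and no parallel pair containing `0`. -/
theorem zero_conePoint_NBC {n : ℕ} (M : Matroid (Fin (n + 1)))
    (hE : M.E = Set.univ)
    (hloopless : ∀ e : Fin (n + 1), M.Indep {e})
    (hparallel : ∀ e : Fin (n + 1), e ≠ 0 → M.Indep {0, e})
    (F : Set (Fin (n + 1)))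
    (hFnbc : ∀ B, M.IsBrokenCircuit B → ¬ B ⊆ F)
    (hFindep : M.Indep F) :
    (∀ B, M.IsBrokenCircuit B → ¬ B ⊆ F ∪ {0}) ∧ M.Indep (F ∪ {0}) := by
  -- Key: no broken circuit contains 0.
  have hzero : ∀ B, M.IsBrokenCircuit B → (0 : Fin (n+1)) ∉ B := by
    rintro B ⟨C, m, hC, hmC, hmin, rfl⟩ ⟨h0C, h0m⟩
    have : m = 0 := le_antisymm (hmin 0 h0C) (Fin.zero_le m)
    exact h0m (by simp [this])
  have hnbc : ∀ B, M.IsBrokenCircuit B → ¬ B ⊆ F ∪ {0} := by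
    intro B hB hsub
    refine hFnbc B hB (fun x hx => ?_)
    rcases hsub hx with h | h
    · exact h
    · exact absurd (Set.mem_singleton_iff.mp h ▸ hx) (hzero B hB)
  refine ⟨hnbc, ?_⟩
  by_contra hdep
  have hdep' : M.Dep (F ∪ {0}) := ⟨hdep, by rw [hE]; exact Set.subset_univ _⟩
  -- find a minimal dependent subset of F ∪ {0}
  set S : Set (Set (Fin (n+1))) := {C | C ⊆ F ∪ {0} ∧ M.Dep C} with hS
  have hne : S.Nonempty := ⟨F ∪ {0}, Set.Subset.rfl, hdep'⟩
  obtain ⟨C, hCS, hCmin⟩ : ∃ C ∈ S, ∀ D ∈ S, id D ≤ id C → id C = id D := by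
    obtain ⟨C, hC⟩ := (Set.toFinite S).exists_minimal hne
    exact ⟨C, hC.1, fun D hD h => le_antisymm (hC.2 hD h) h⟩
  have hCdep : M.Dep C := hCS.2
  have hCsub : C ⊆ F ∪ {0} := hCS.1
  have hcirc : M.IsCircuit' C := by
    refine ⟨hCdep, fun D hD => ?_⟩
    by_contra hDi
    have hDdep : M.Dep D := ⟨hDi, by rw [hE]; exact Set.subset_univ _⟩
    have : C ⊆ D := (hCmin D ⟨hD.subset.trans hCsub, hDdep⟩ hD.subset).le
    exact absurd this hD.not_subset
  have h0C : (0 : Fin (n+1)) ∈ C := by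
    by_contra h0
    have : C ⊆ F := fun x hx => by
      rcases hCsub hx with h | h
      · exact h
      · exact absurd (Set.mem_singleton_iff.mp h ▸ hx) h0
    exact hCdep.1 (hFindep.subset this)
  have hBC : M.IsBrokenCircuit (C \ {0}) :=
    ⟨C, 0, hcirc, h0C, fun k _ => Fin.zero_le k, rfl⟩
  refine hFnbc _ hBC (fun x hx => ?_)
  rcases hCsub hx.1 with h | h
  · exact h
  · exact absurd h hx.2
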